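/- Let (l_i)_{i≥0} be independent ℕ-valued random variables with P(l_i ≥ l) ≤ e^{−c l} for all l ≥ 1 and some c > 0, and P(l_i = 0) ≥ ε > 0. Define the random set I = ⋃_{i=0}^{n+1} [i − l_i, i] ⊆ ℝ (sticks). Then there exist C' < ∞ and c' > 0, depending only on c and ε, such that P(I is connected, i.e., I ⊇ [0, n+1]) ≤ C' e^{−c' n}. -/

import Mathlib

open MeasureTheory ProbabilityTheory

private lemma aux_range_geom {q : ℝ} (h0 : 0 ≤ q) (h1 : q < 1) (N : ℕ) :
    ∑ i ∈ Finset.range N, q ^ i ≤ (1 - q)⁻¹ := by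
  have h := Summable.sum_le_tsum (Finset.range N) (fun i _ => pow_nonneg h0 i)
    (summable_geometric_of_lt_one h0 h1)
  rwa [tsum_geometric_of_lt_one h0 h1] at h

private lemma aux_geom_shift {q : ℝ} (h0 : 0 ≤ q) (h1 : q < 1) (a b d : ℕ) (hd : d ≤ a) :
    ∑ i ∈ Finset.Ioc a b, q ^ (i - d) ≤ q ^ (a + 1 - d) * (1 - q)⁻¹ := by
  have key : Finset.Ioc a b = Finset.Ico (a + 1) (b + 1) := by
    rw [Finset.Ico_add_one_right_eq_Icc, Finset.Icc_add_one_left_eq_Ioc]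
  rw [key, Finset.sum_Ico_eq_sum_range]
  have h2 : ∀ i ∈ Finset.range (b + 1 - (a + 1)), q ^ (a + 1 + i - d) = q ^ (a + 1 - d) * q ^ i := by
    intro i _
    rw [← pow_add]
    congr 1
    omega
  rw [Finset.sum_congr rfl h2, ← Finset.mul_sum]
  exact mul_le_mul_of_nonneg_left (aux_range_geom h0 h1 _) (pow_nonneg h0 _)

private lemma aux_prod_one_sub (s : Finset ℕ) (x : ℕ → ℝ) (h0 : ∀ i ∈ s, 0 ≤ x i)
    (h1 : ∀ i ∈ s, x i ≤ 1) : 1 - ∑ i ∈ s, x i ≤ ∏ i ∈ s, (1 - x i) := by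
  induction s using Finset.cons_induction with
  | empty => simp
  | cons a s ha ih =>
    rw [Finset.sum_cons, Finset.prod_cons]
    have ih' := ih (fun i hi => h0 i (Finset.mem_cons_of_mem hi))
      (fun i hi => h1 i (Finset.mem_cons_of_mem hi))
    have hx0 := h0 a (Finset.mem_cons_self a s)
    have hx1 := h1 a (Finset.mem_cons_self a s)
    have hsum : 0 ≤ ∑ i ∈ s, x i :=
      Finset.sum_nonneg (fun i hi => h0 i (Finset.mem_cons_of_mem hi))
    nlinarith

theorem stick_percolation_connected_bound (c ε : ℝ) (hc : 0 < c) (hε : 0 < ε) :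
    ∃ C' > (0 : ℝ), ∃ c' > (0 : ℝ),
      ∀ (Ω : Type) [MeasurableSpace Ω] (μ : Measure Ω)
        [IsProbabilityMeasure μ] (l : ℕ → Ω → ℕ),
        (∀ i, Measurable (l i)) →
        iIndepFun l μ →
        (∀ i ω, l i ω ≤ i) →
        (∀ i, ∀ k : ℕ, 1 ≤ k → (μ {ω | k ≤ l i ω}).toReal ≤ Real.exp (-(c * k))) →
        (∀ i, ε ≤ (μ {ω | l i ω = 0}).toReal) →
        ∀ n : ℕ,
          (μ {ω | ∀ j ≤ n, ∃ i ≤ n + 1, j < i ∧ i ≤ j + l i ω}).toReal ≤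
            C' * Real.exp (-(c' * n)) := by
  -- basic constants
  set q₀ : ℝ := Real.exp (-c) with hq₀_def
  have hq₀_pos : 0 < q₀ := Real.exp_pos _
  have hq₀_lt : q₀ < 1 := by
    rw [hq₀_def]
    exact Real.exp_lt_one_iff.mpr (by linarith)
  have hq₀_nonneg : 0 ≤ q₀ := hq₀_pos.le
  set M : ℝ := (1 - q₀)⁻¹ with hM_def
  have hM_pos : 0 < M := inv_pos.mpr (by linarith)
  set ε₁ : ℝ := min ε 1 with hε₁_def
  have hε₁_pos : 0 < ε₁ := lt_min hε one_pos
  have hε₁_le_one : ε₁ ≤ 1 := min_le_right _ _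
  -- choose R
  obtain ⟨R, hR⟩ : ∃ R : ℕ, q₀ ^ (R + 1) * M ≤ 1 / 2 := by
    obtain ⟨N, hN⟩ := exists_pow_lt_of_lt_one (x := (1 - q₀) / 2) (by linarith) hq₀_lt
    refine ⟨N, ?_⟩
    have h1 : q₀ ^ (N + 1) ≤ q₀ ^ N := pow_le_pow_of_le_one hq₀_nonneg hq₀_lt.le (Nat.le_succ N)
    have h2 : q₀ ^ (N + 1) ≤ (1 - q₀) / 2 := le_of_lt (lt_of_le_of_lt h1 hN)
    have h3 : (0:ℝ) < 1 - q₀ := by linarith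
    rw [hM_def]
    calc q₀ ^ (N + 1) * (1 - q₀)⁻¹ ≤ ((1 - q₀) / 2) * (1 - q₀)⁻¹ :=
          mul_le_mul_of_nonneg_right h2 (inv_nonneg.mpr h3.le)
      _ = 1 / 2 := by field_simp
  set δ : ℝ := ε₁ ^ R / 2 with hδ_def
  have hδ_pos : 0 < δ := by positivity
  have hδ_le : δ ≤ 1 / 2 := by
    have : ε₁ ^ R ≤ 1 := pow_le_one₀ hε₁_pos.le hε₁_le_one
    rw [hδ_def]; linarith
  set ρ : ℝ := 1 - δ / 2 with hρ_def
  have hρ_pos : 0 < ρ := by rw [hρ_def]; linarith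
  have hρ_lt : ρ < 1 := by rw [hρ_def]; linarith
  -- choose D
  obtain ⟨D, hD_R, hD_1, hDq_half, hDq_main⟩ :
      ∃ D : ℕ, R ≤ D ∧ 1 ≤ D ∧ q₀ ^ D / ρ ≤ 1 / 2 ∧ 2 * M * (q₀ ^ D / ρ) ≤ δ / 2 := by
    obtain ⟨N, hN⟩ := exists_pow_lt_of_lt_one
      (x := min (ρ / 2) (δ * ρ / (8 * M))) (by positivity) hq₀_lt
    refine ⟨max (max R 1) N, le_trans (le_max_left _ _) (le_max_left _ _),
      le_trans (le_max_right _ _) (le_max_left _ _), ?_, ?_⟩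
    · have h1 : q₀ ^ max (max R 1) N ≤ q₀ ^ N :=
        pow_le_pow_of_le_one hq₀_nonneg hq₀_lt.le (le_max_right _ _)
      have h2 : q₀ ^ max (max R 1) N ≤ ρ / 2 :=
        le_of_lt (lt_of_le_of_lt h1 (lt_of_lt_of_le hN (min_le_left _ _)))
      rw [div_le_iff₀ hρ_pos]
      calc q₀ ^ max (max R 1) N ≤ ρ / 2 := h2
        _ = 1 / 2 * ρ := by ring
    · have h1 : q₀ ^ max (max R 1) N ≤ q₀ ^ N :=
        pow_le_pow_of_le_one hq₀_nonneg hq₀_lt.le (le_max_right _ _)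
      have h2 : q₀ ^ max (max R 1) N ≤ δ * ρ / (8 * M) :=
        le_of_lt (lt_of_le_of_lt h1 (lt_of_lt_of_le hN (min_le_right _ _)))
      have hM8 : (0:ℝ) < 8 * M := by linarith
      calc 2 * M * (q₀ ^ max (max R 1) N / ρ)
          ≤ 2 * M * ((δ * ρ / (8 * M)) / ρ) := by
            gcongr
        _ = δ / 4 := by field_simp; ring
        _ ≤ δ / 2 := by linarith
  have hD_pos : 0 < D := hD_1
  -- final constants
  have hlogρ : Real.log ρ < 0 := Real.log_neg hρ_pos hρ_lt
  have hDcast : (0:ℝ) < (D:ℝ) := Nat.cast_pos.mpr hD_pos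
  refine ⟨1, one_pos, -Real.log ρ / D, div_pos (by linarith) hDcast, ?_⟩
  intro Ω _ μ _ l hml hind hle htail hatom n
  set m := n / D with hm_def
  set A : ℕ → Set Ω := fun k => {ω | ∃ i, i ≤ n + 1 ∧ k * D < i ∧ i ≤ k * D + l i ω}
    with hA_def
  set Sv : ℕ → Set Ω := fun k => ⋂ k' ∈ Finset.Icc k m, A k' with hSv_def
  set Cs : ℕ → ℕ → Set Ω := fun k r =>
    {ω | ∃ i, r * D < i ∧ i ≤ r * D + D ∧ i ≤ k * D + l i ω} with hCs_def
  -- measurability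
  have hmeas_single : ∀ (i : ℕ) (T : Set ℕ), MeasurableSet ((l i) ⁻¹' T) :=
    fun i T => hml i ((Set.to_countable T).measurableSet)
  have hCs_meas : ∀ k r, MeasurableSet (Cs k r) := by
    intro k r
    have heq : Cs k r = ⋃ i ∈ Finset.Ioc (r * D) (r * D + D), (l i) ⁻¹' {v | i ≤ k * D + v} := by
      ext ω
      simp only [hCs_def, Set.mem_setOf_eq, Set.mem_iUnion, Set.mem_preimage, Finset.mem_Ioc,
        exists_prop]
      constructor
      · rintro ⟨i, h1, h2, h3⟩; exact ⟨i, ⟨h1, h2⟩, h3⟩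
      · rintro ⟨i, ⟨h1, h2⟩, h3⟩; exact ⟨i, h1, h2, h3⟩
    rw [heq]
    exact (Finset.Ioc (r * D) (r * D + D)).measurableSet_biUnion
      (fun i _ => hmeas_single i _)
  -- independence
  have hprodindep : ∀ k r, k ≤ r → μ (Cs k r ∩ Sv (r + 1)) = μ (Cs k r) * μ (Sv (r + 1)) := by
    intro k r hkr
    set S₁ := Finset.Ioc (r * D) (r * D + D) with hS₁_def
    set T₁ := Finset.Ioc (r * D + D) (n + 1) with hT₁_def
    have hdisj : Disjoint S₁ T₁ := by
      rw [Finset.disjoint_left]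
      intro i hi1 hi2
      rw [hS₁_def, Finset.mem_Ioc] at hi1
      rw [hT₁_def, Finset.mem_Ioc] at hi2
      omega
    have hIF := hind.indepFun_finset S₁ T₁ hdisj hml
    set X : Set (↥S₁ → ℕ) := {x | ∃ i : ↥S₁, (i : ℕ) ≤ k * D + x i} with hX_def
    set Y : Set (↥T₁ → ℕ) := {y | ∀ k', r + 1 ≤ k' → k' ≤ m →
      ∃ i : ↥T₁, k' * D < (i : ℕ) ∧ (i : ℕ) ≤ k' * D + y i} with hY_def
    have hCX : Cs k r = (fun a (i : ↥S₁) => l (i : ℕ) a) ⁻¹' X := by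
      ext ω
      simp only [hCs_def, Set.mem_setOf_eq, Set.mem_preimage, hX_def]
      constructor
      · rintro ⟨i, h1, h2, h3⟩
        exact ⟨⟨i, by rw [hS₁_def, Finset.mem_Ioc]; exact ⟨h1, h2⟩⟩, h3⟩
      · rintro ⟨⟨i, hi⟩, h3⟩
        rw [hS₁_def, Finset.mem_Ioc] at hi
        exact ⟨i, hi.1, hi.2, h3⟩
    have hSY : Sv (r + 1) = (fun a (i : ↥T₁) => l (i : ℕ) a) ⁻¹' Y := by
      ext ω
      simp only [hSv_def, Set.mem_iInter, Set.mem_preimage, hY_def, Set.mem_setOf_eq,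
        Finset.mem_Icc, hA_def]
      constructor
      · intro h k' h1 h2
        obtain ⟨i, hi1, hi2, hi3⟩ := h k' ⟨h1, h2⟩
        have hiT : i ∈ T₁ := by
          rw [hT₁_def, Finset.mem_Ioc]
          have : (r + 1) * D ≤ k' * D := Nat.mul_le_mul_right D h1
          have h5 : (r + 1) * D = r * D + D := by ring
          omega
        exact ⟨⟨i, hiT⟩, hi2, hi3⟩
      · intro h k' hk'
        obtain ⟨⟨i, hiT⟩, hh1, hh2⟩ := h k' hk'.1 hk'.2
        rw [hT₁_def, Finset.mem_Ioc] at hiT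
        exact ⟨i, hiT.2, hh1, hh2⟩
    rw [hCX, hSY]
    exact hIF.measure_inter_preimage_eq_mul X Y
      ((Set.to_countable X).measurableSet) ((Set.to_countable Y).measurableSet)
  -- off-diagonal bound
  have hC_off : ∀ k r, k < r → (μ (Cs k r)).toReal ≤ M * q₀ ^ ((r - k) * D) := by
    intro k r hkr
    have hkD : k * D + D ≤ r * D := by
      have h4 : (k + 1) * D ≤ r * D := Nat.mul_le_mul_right D hkr
      have h5 : (k + 1) * D = k * D + D := by ring
      omega
    have hsub : Cs k r ⊆ ⋃ i ∈ Finset.Ioc (r * D) (r * D + D), {ω | i - k * D ≤ l i ω} := by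
      intro ω hω
      obtain ⟨i, h1, h2, h3⟩ := hω
      simp only [Set.mem_iUnion, Finset.mem_Ioc, exists_prop, Set.mem_setOf_eq]
      exact ⟨i, ⟨h1, h2⟩, by omega⟩
    have step1 : (μ (Cs k r)).toReal ≤
        ∑ i ∈ Finset.Ioc (r * D) (r * D + D), (μ {ω | i - k * D ≤ l i ω}).toReal := by
      calc (μ (Cs k r)).toReal
          ≤ ((∑ i ∈ Finset.Ioc (r * D) (r * D + D), μ {ω | i - k * D ≤ l i ω})).toReal := by
            apply ENNReal.toReal_mono (ENNReal.sum_ne_top.mpr (fun a _ => measure_ne_top μ _))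
            exact le_trans (measure_mono hsub) (measure_biUnion_finset_le _ _)
        _ = ∑ i ∈ Finset.Ioc (r * D) (r * D + D), (μ {ω | i - k * D ≤ l i ω}).toReal :=
            ENNReal.toReal_sum (fun a _ => measure_ne_top μ _)
    have step2 : ∀ i ∈ Finset.Ioc (r * D) (r * D + D),
        (μ {ω | i - k * D ≤ l i ω}).toReal ≤ q₀ ^ (i - k * D) := by
      intro i hi
      rw [Finset.mem_Ioc] at hi
      have h1 : 1 ≤ i - k * D := by omega
      have h2 := htail i (i - k * D) h1
      have h3 : Real.exp (-(c * (i - k * D : ℕ))) = q₀ ^ (i - k * D) := by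
        rw [hq₀_def, ← Real.exp_nat_mul]
        congr 1
        ring
      rw [h3] at h2
      exact h2
    have step3 : ∑ i ∈ Finset.Ioc (r * D) (r * D + D), q₀ ^ (i - k * D)
        ≤ q₀ ^ (r * D + 1 - k * D) * M := by
      rw [hM_def]
      exact aux_geom_shift hq₀_nonneg hq₀_lt (r * D) (r * D + D) (k * D) (by omega)
    have hexp : r * D + 1 - k * D = (r - k) * D + 1 := by
      have : (r - k) * D = r * D - k * D := Nat.sub_mul r k D
      omega
    calc (μ (Cs k r)).toReal
        ≤ ∑ i ∈ Finset.Ioc (r * D) (r * D + D), q₀ ^ (i - k * D) :=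
          le_trans step1 (Finset.sum_le_sum step2)
      _ ≤ q₀ ^ (r * D + 1 - k * D) * M := step3
      _ = M * (q₀ ^ ((r - k) * D) * q₀) := by rw [hexp, pow_succ]; ring
      _ ≤ M * (q₀ ^ ((r - k) * D) * 1) := by
          apply mul_le_mul_of_nonneg_left _ hM_pos.le
          exact mul_le_mul_of_nonneg_left hq₀_lt.le (pow_nonneg hq₀_nonneg _)
      _ = M * q₀ ^ ((r - k) * D) := by ring
  -- diagonal bound
  have hC_diag : ∀ k, (μ (Cs k k)).toReal ≤ 1 - δ := by
    intro k
    set p : ℕ → ℝ := fun i => (μ ((l i) ⁻¹' {v | k * D + v < i})).toReal with hp_def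
    have hp_nonneg : ∀ i, 0 ≤ p i := fun i => ENNReal.toReal_nonneg
    have hcompl : (Cs k k)ᶜ = ⋂ i ∈ Finset.Ioc (k * D) (k * D + D),
        (l i) ⁻¹' {v | k * D + v < i} := by
      ext ω
      simp only [Set.mem_compl_iff, hCs_def, Set.mem_setOf_eq, not_exists, Set.mem_iInter,
        Finset.mem_Ioc, Set.mem_preimage]
      constructor
      · intro h i hi
        have := h i
        omega
      · intro h i hcon
        obtain ⟨h1, h2, h3⟩ := hcon
        have := h i ⟨h1, h2⟩
        omega
    have hprodc : (μ ((Cs k k)ᶜ)).toReal = ∏ i ∈ Finset.Ioc (k * D) (k * D + D), p i := by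
      rw [hcompl, hind.measure_inter_preimage_eq_mul (Finset.Ioc (k * D) (k * D + D))
        (sets := fun i => {v | k * D + v < i}) (fun i _ => (Set.to_countable _).measurableSet),
        ENNReal.toReal_prod]
    -- part 1 : small indices
    have h1 : ε₁ ^ R ≤ ∏ i ∈ Finset.Ioc (k * D) (k * D + R), p i := by
      have hbound : ∀ i ∈ Finset.Ioc (k * D) (k * D + R), ε₁ ≤ p i := by
        intro i hi
        rw [Finset.mem_Ioc] at hi
        have hsub : {ω | l i ω = 0} ⊆ (l i) ⁻¹' {v | k * D + v < i} := by
          intro ω hω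
          simp only [Set.mem_setOf_eq] at hω
          simp only [Set.mem_preimage, Set.mem_setOf_eq, hω]
          omega
        calc ε₁ ≤ ε := min_le_left _ _
          _ ≤ (μ {ω | l i ω = 0}).toReal := hatom i
          _ ≤ p i := ENNReal.toReal_mono (measure_ne_top μ _) (measure_mono hsub)
      calc ε₁ ^ R = ∏ _i ∈ Finset.Ioc (k * D) (k * D + R), ε₁ := by
            rw [Finset.prod_const, Nat.card_Ioc]
            congr 1
            omega
        _ ≤ ∏ i ∈ Finset.Ioc (k * D) (k * D + R), p i :=
            Finset.prod_le_prod (fun i _ => hε₁_pos.le) hbound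
    -- part 2 : large indices
    have h2 : (1 : ℝ) / 2 ≤ ∏ i ∈ Finset.Ioc (k * D + R) (k * D + D), p i := by
      have hbound : ∀ i ∈ Finset.Ioc (k * D + R) (k * D + D),
          1 - q₀ ^ (i - k * D) ≤ p i := by
        intro i hi
        rw [Finset.mem_Ioc] at hi
        have hms : MeasurableSet {ω | i - k * D ≤ l i ω} := by
          have : {ω | i - k * D ≤ l i ω} = (l i) ⁻¹' (Set.Ici (i - k * D)) := rfl
          rw [this]; exact hmeas_single i _
        have hadd := measure_add_measure_compl (μ := μ) hms
        rw [measure_univ] at hadd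
        have hadd' : (μ {ω | i - k * D ≤ l i ω}).toReal
            + (μ ({ω | i - k * D ≤ l i ω}ᶜ)).toReal = 1 := by
          rw [← ENNReal.toReal_add (measure_ne_top μ _) (measure_ne_top μ _), hadd]
          simp
        have hceq : ({ω | i - k * D ≤ l i ω}ᶜ) = (l i) ⁻¹' {v | k * D + v < i} := by
          ext ω
          simp only [Set.mem_compl_iff, Set.mem_setOf_eq, not_le, Set.mem_preimage]
          omega
        have h1le : 1 ≤ i - k * D := by omega
        have htail' := htail i (i - k * D) h1le
        have hq : Real.exp (-(c * ((i - k * D : ℕ) : ℝ))) = q₀ ^ (i - k * D) := by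
          rw [hq₀_def, ← Real.exp_nat_mul]
          congr 1
          ring
        rw [hq] at htail'
        rw [hp_def]
        simp only
        rw [← hceq]
        linarith
      have hnneg : ∀ i ∈ Finset.Ioc (k * D + R) (k * D + D), 0 ≤ 1 - q₀ ^ (i - k * D) := by
        intro i hi
        have : q₀ ^ (i - k * D) ≤ 1 := pow_le_one₀ hq₀_nonneg hq₀_lt.le
        linarith
      have hsum : ∑ i ∈ Finset.Ioc (k * D + R) (k * D + D), q₀ ^ (i - k * D) ≤ 1 / 2 := by
        calc ∑ i ∈ Finset.Ioc (k * D + R) (k * D + D), q₀ ^ (i - k * D)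
            ≤ q₀ ^ (k * D + R + 1 - k * D) * (1 - q₀)⁻¹ :=
              aux_geom_shift hq₀_nonneg hq₀_lt _ _ _ (by omega)
          _ = q₀ ^ (R + 1) * M := by rw [hM_def]; congr 2; omega
          _ ≤ 1 / 2 := hR
      calc (1 : ℝ) / 2 = 1 - 1 / 2 := by ring
        _ ≤ 1 - ∑ i ∈ Finset.Ioc (k * D + R) (k * D + D), q₀ ^ (i - k * D) := by linarith
        _ ≤ ∏ i ∈ Finset.Ioc (k * D + R) (k * D + D), (1 - q₀ ^ (i - k * D)) :=
            aux_prod_one_sub _ _ (fun i _ => pow_nonneg hq₀_nonneg _)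
              (fun i hi => by
                have : q₀ ^ (i - k * D) ≤ 1 := pow_le_one₀ hq₀_nonneg hq₀_lt.le
                linarith)
        _ ≤ ∏ i ∈ Finset.Ioc (k * D + R) (k * D + D), p i :=
            Finset.prod_le_prod hnneg hbound
    have hδle : δ ≤ (μ ((Cs k k)ᶜ)).toReal := by
      rw [hprodc, ← Finset.prod_Ioc_consecutive p (by omega : k * D ≤ k * D + R)
        (by omega : k * D + R ≤ k * D + D)]
      calc δ = ε₁ ^ R * (1 / 2) := by rw [hδ_def]; ring
        _ ≤ (∏ i ∈ Finset.Ioc (k * D) (k * D + R), p i)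
            * ∏ i ∈ Finset.Ioc (k * D + R) (k * D + D), p i := by
            apply mul_le_mul h1 h2 (by norm_num) (le_trans (by positivity) h1)
    have haddc := measure_add_measure_compl (μ := μ) (hCs_meas k k)
    rw [measure_univ] at haddc
    have haddc' : (μ (Cs k k)).toReal + (μ ((Cs k k)ᶜ)).toReal = 1 := by
      rw [← ENNReal.toReal_add (measure_ne_top μ _) (measure_ne_top μ _), haddc]
      simp
    linarith
  -- recursion
  have hrec : ∀ k, k ≤ m → (μ (Sv k)).toReal ≤
      ∑ r ∈ Finset.Icc k m, (μ (Cs k r)).toReal * (μ (Sv (r + 1))).toReal := by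
    intro k hk
    have hsub : Sv k ⊆ ⋃ r ∈ Finset.Icc k m, (Cs k r ∩ Sv (r + 1)) := by
      intro ω hω
      have hA : ω ∈ A k := by
        have := Set.mem_iInter₂.mp hω k (Finset.mem_Icc.mpr ⟨le_refl k, hk⟩)
        exact this
      obtain ⟨i, hi1, hi2, hi3⟩ := hA
      set r := (i - 1) / D with hr_def
      have hdm : D * r + (i - 1) % D = i - 1 := by rw [hr_def]; exact Nat.div_add_mod _ _
      have hmod : (i - 1) % D < D := Nat.mod_lt _ hD_pos
      have hcomm : r * D = D * r := Nat.mul_comm r D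
      have hr1 : r * D < i := by omega
      have hr2 : i ≤ r * D + D := by omega
      have hkr : k ≤ r := by
        by_contra hcon
        push_neg at hcon
        have : (r + 1) * D ≤ k * D := Nat.mul_le_mul_right D hcon
        have h5 : (r + 1) * D = r * D + D := by ring
        omega
      have hrm : r ≤ m := by
        rw [hm_def]
        exact (Nat.le_div_iff_mul_le hD_pos).mpr (by omega)
      refine Set.mem_biUnion (Finset.mem_Icc.mpr ⟨hkr, hrm⟩) ⟨⟨i, hr1, hr2, hi3⟩, ?_⟩
      refine Set.mem_iInter₂.mpr (fun k' hk' => ?_)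
      rw [Finset.mem_Icc] at hk'
      exact Set.mem_iInter₂.mp hω k' (Finset.mem_Icc.mpr ⟨by omega, hk'.2⟩)
    calc (μ (Sv k)).toReal
        ≤ ((∑ r ∈ Finset.Icc k m, μ (Cs k r ∩ Sv (r + 1)))).toReal := by
          apply ENNReal.toReal_mono (ENNReal.sum_ne_top.mpr (fun a _ => measure_ne_top μ _))
          exact le_trans (measure_mono hsub) (measure_biUnion_finset_le _ _)
      _ = ∑ r ∈ Finset.Icc k m, (μ (Cs k r ∩ Sv (r + 1))).toReal :=
          ENNReal.toReal_sum (fun a _ => measure_ne_top μ _)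
      _ = ∑ r ∈ Finset.Icc k m, (μ (Cs k r)).toReal * (μ (Sv (r + 1))).toReal := by
          apply Finset.sum_congr rfl
          intro r hr
          rw [Finset.mem_Icc] at hr
          rw [hprodindep k r hr.1, ENNReal.toReal_mul]
  -- main induction
  have hmain : ∀ t, ∀ k, k + t = m + 1 → (μ (Sv k)).toReal ≤ ρ ^ t := by
    intro t
    induction t using Nat.strong_induction_on with
    | _ t ih =>
      intro k hkt
      match t, hkt with
      | 0, hkt =>
        have hk : k = m + 1 := by omega
        have hSe : Sv k = Set.univ := by
          rw [hSv_def, hk]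
          simp [Finset.Icc_eq_empty_of_lt (Nat.lt_succ_self m)]
        rw [hSe]
        simp
      | (t' + 1), hkt =>
        have hkm : k ≤ m := by omega
        have hmk : m = k + t' := by omega
        -- individual bounds
        have hdiagterm : (μ (Cs k k)).toReal * (μ (Sv (k + 1))).toReal ≤ (1 - δ) * ρ ^ t' := by
          apply mul_le_mul (hC_diag k) (ih t' (by omega) (k + 1) (by omega))
            ENNReal.toReal_nonneg (by linarith)
        have hoffterm : ∀ r ∈ Finset.Ioc k m,
            (μ (Cs k r)).toReal * (μ (Sv (r + 1))).toReal
              ≤ (q₀ ^ D / ρ) ^ (r - k) * (M * ρ ^ t') := by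
          intro r hr
          rw [Finset.mem_Ioc] at hr
          have hSr : (μ (Sv (r + 1))).toReal ≤ ρ ^ (m - r) :=
            ih (m - r) (by omega) (r + 1) (by omega)
          have hCr := hC_off k r hr.1
          have hcalc : M * q₀ ^ ((r - k) * D) * ρ ^ (m - r)
              = (q₀ ^ D / ρ) ^ (r - k) * (M * ρ ^ t') := by
            have h1 : q₀ ^ ((r - k) * D) = (q₀ ^ D) ^ (r - k) := by
              rw [← pow_mul, Nat.mul_comm]
            have h2 : (ρ : ℝ) ^ t' = ρ ^ (r - k) * ρ ^ (m - r) := by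
              rw [← pow_add]
              congr 1
              omega
            rw [h1, h2, div_pow, div_mul_eq_mul_div, mul_comm]
            field_simp
          calc (μ (Cs k r)).toReal * (μ (Sv (r + 1))).toReal
              ≤ (M * q₀ ^ ((r - k) * D)) * ρ ^ (m - r) := by
                apply mul_le_mul hCr hSr ENNReal.toReal_nonneg
                positivity
            _ = (q₀ ^ D / ρ) ^ (r - k) * (M * ρ ^ t') := hcalc
        -- sum of off terms
        have hoffsum : ∑ r ∈ Finset.Ioc k m, (q₀ ^ D / ρ) ^ (r - k) * (M * ρ ^ t')
            ≤ (δ / 2) * ρ ^ t' := by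
          have hQ0 : 0 ≤ q₀ ^ D / ρ := by positivity
          have hQ1 : q₀ ^ D / ρ < 1 := lt_of_le_of_lt hDq_half (by norm_num)
          have hgeo : ∑ r ∈ Finset.Ioc k m, (q₀ ^ D / ρ) ^ (r - k)
              ≤ (q₀ ^ D / ρ) ^ 1 * (1 - q₀ ^ D / ρ)⁻¹ := by
            have := aux_geom_shift hQ0 hQ1 k m k (le_refl k)
            simpa using this
          have hinv2 : (1 - q₀ ^ D / ρ)⁻¹ ≤ 2 := by
            rw [inv_le_comm₀ (by linarith) (by norm_num)]
            linarith
          have hbound : ∑ r ∈ Finset.Ioc k m, (q₀ ^ D / ρ) ^ (r - k) ≤ 2 * (q₀ ^ D / ρ) := by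
        
            calc ∑ r ∈ Finset.Ioc k m, (q₀ ^ D / ρ) ^ (r - k)
                ≤ (q₀ ^ D / ρ) ^ 1 * (1 - q₀ ^ D / ρ)⁻¹ := hgeo
              _ ≤ (q₀ ^ D / ρ) ^ 1 * 2 := by
                  apply mul_le_mul_of_nonneg_left hinv2 (by positivity)
              _ = 2 * (q₀ ^ D / ρ) := by ring
          rw [← Finset.sum_mul]
          calc (∑ r ∈ Finset.Ioc k m, (q₀ ^ D / ρ) ^ (r - k)) * (M * ρ ^ t')
              ≤ (2 * (q₀ ^ D / ρ)) * (M * ρ ^ t') := by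
                apply mul_le_mul_of_nonneg_right hbound (by positivity)
            _ = (2 * M * (q₀ ^ D / ρ)) * ρ ^ t' := by ring
            _ ≤ (δ / 2) * ρ ^ t' := by
                apply mul_le_mul_of_nonneg_right hDq_main (by positivity)
        -- assemble
        calc (μ (Sv k)).toReal
            ≤ ∑ r ∈ Finset.Icc k m, (μ (Cs k r)).toReal * (μ (Sv (r + 1))).toReal := hrec k hkm
          _ = (μ (Cs k k)).toReal * (μ (Sv (k + 1))).toReal
              + ∑ r ∈ Finset.Ioc k m, (μ (Cs k r)).toReal * (μ (Sv (r + 1))).toReal := by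
              rw [← Finset.Ioc_insert_left hkm, Finset.sum_insert (by simp)]
          _ ≤ (1 - δ) * ρ ^ t'
              + ∑ r ∈ Finset.Ioc k m, (q₀ ^ D / ρ) ^ (r - k) * (M * ρ ^ t') := by
              apply add_le_add hdiagterm (Finset.sum_le_sum hoffterm)
          _ ≤ (1 - δ) * ρ ^ t' + (δ / 2) * ρ ^ t' := by linarith [hoffsum]
          _ = ρ ^ (t' + 1) := by
              rw [pow_succ, hρ_def]
              ring
  -- conclusion
  have hEsub : {ω | ∀ j ≤ n, ∃ i ≤ n + 1, j < i ∧ i ≤ j + l i ω} ⊆ Sv 0 := by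
    intro ω hω
    rw [hSv_def]
    refine Set.mem_iInter₂.mpr (fun k hk => ?_)
    rw [Finset.mem_Icc] at hk
    have hkD : k * D ≤ n :=
      le_trans (Nat.mul_le_mul_right D hk.2) (Nat.div_mul_le_self n D)
    obtain ⟨i, hi, h1, h2⟩ := hω (k * D) hkD
    exact ⟨i, hi, h1, h2⟩
  have hfinal : (μ {ω | ∀ j ≤ n, ∃ i ≤ n + 1, j < i ∧ i ≤ j + l i ω}).toReal ≤ ρ ^ (m + 1) := by
    refine le_trans (ENNReal.toReal_mono (measure_ne_top μ _) (measure_mono hEsub)) ?_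
    exact hmain (m + 1) 0 (by omega)
  have hρpow : ρ ^ (m + 1) ≤ Real.exp (-(-Real.log ρ / D * n)) := by
    have h1 : ρ ^ (m + 1) = Real.exp ((m + 1 : ℕ) * Real.log ρ) := by
      rw [Real.exp_nat_mul, Real.exp_log hρ_pos]
    rw [h1]
    apply Real.exp_le_exp.mpr
    have h2 : (n : ℝ) / D ≤ (m + 1 : ℕ) := by
      rw [div_le_iff₀ hDcast]
      have h3 : n < (m + 1) * D := by
        have h4 := Nat.div_add_mod n D
        have h5 := Nat.mod_lt n hD_pos
        have h6 : (m + 1) * D = D * (n / D) + D := by rw [hm_def]; ring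
        omega
      push_cast
      exact_mod_cast le_of_lt (by exact_mod_cast h3)
    calc ((m + 1 : ℕ) : ℝ) * Real.log ρ ≤ ((n : ℝ) / D) * Real.log ρ :=
          mul_le_mul_of_nonpos_right h2 hlogρ.le
      _ = -(-Real.log ρ / D * n) := by field_simp
  calc (μ {ω | ∀ j ≤ n, ∃ i ≤ n + 1, j < i ∧ i ≤ j + l i ω}).toReal
      ≤ ρ ^ (m + 1) := hfinal
    _ ≤ Real.exp (-(-Real.log ρ / D * n)) := hρpow
    _ = 1 * Real.exp (-(-Real.log ρ / D * n)) := by ring
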